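/- Let ℓ ≥ 2 be an integer. Every ℓ-uniform hypergraph H admits an orientation (a function assigning to each edge one of its vertices) such that for every set of ℓ−1 vertices {v_1,…,v_{ℓ−1}}, the number of edges of H that contain all of v_1,…,v_{ℓ−1} and are oriented at a vertex not in {v_1,…,v_{ℓ−1}} is at most ⌈ ((ℓ−1)!/(ℓ!)^{(ℓ−1)/ℓ}) · e(H)^{1/ℓ} ⌉, where e(H) is the number of edges of H. -/

import Mathlib

section Defs

variable {V W : Type*}

/-- A clause is a finite set of literals; a literal is a variable paired with a polarity
(`true` = positive, `false` = negative). -/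
abbrev SatClause (V : Type*) := Finset (V × Bool)

/-- A formula is a finite set of clauses. -/
abbrev SatFormula (V : Type*) := Finset (SatClause V)

/-- The set of variables used by a clause. -/
def clauseVars [DecidableEq V] (C : SatClause V) : Finset V := C.image Prod.fst

/-- A valid `k`-SAT clause: `k` literals on `k` distinct variables. -/
def IsKClause [DecidableEq V] (k : ℕ) (C : SatClause V) : Prop :=
  C.card = k ∧ (clauseVars C).card = k

/-- A valid `k`-SAT formula. -/
def IsKFormula [DecidableEq V] (k : ℕ) (G : SatFormula V) : Prop :=
  ∀ C ∈ G, IsKClause k C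

/-- An assignment satisfies a clause if it makes all of its literals true. -/
def SatisfiesClause (a : V → Bool) (C : SatClause V) : Prop := ∀ l ∈ C, a l.1 = l.2

/-- A formula is minimal if every clause has a witness assignment satisfying it and no other
clause. -/
def MinimalFormula (G : SatFormula V) : Prop :=
  ∀ C ∈ G, ∃ w : V → Bool, SatisfiesClause w C ∧ ∀ C' ∈ G, SatisfiesClause w C' → C' = C

/-- A formula is simple if no two distinct clauses use the same set of variables. -/
def SimpleFormula [DecidableEq V] (G : SatFormula V) : Prop :=
  ∀ C ∈ G, ∀ C' ∈ G, clauseVars C = clauseVars C' → C = C'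

/-- A formula is unate if every variable occurs with only one polarity. -/
def UnateFormula (G : SatFormula V) : Prop :=
  ∀ x : V, ¬ ((∃ C ∈ G, (x, true) ∈ C) ∧ (∃ C ∈ G, (x, false) ∈ C))

/-- The set of variables used by a formula. -/
def formulaVars [DecidableEq V] (G : SatFormula V) : Finset V := G.biUnion clauseVars

/-- `f` is a `k`-SAT function: it is computed by some `k`-SAT formula (value `1` iff some
clause has all its literals satisfied). -/
def IsKSatFunction (k n : ℕ) (f : (Fin n → Bool) → Bool) : Prop :=
  ∃ G : SatFormula (Fin n), IsKFormula k G ∧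
    ∀ a : Fin n → Bool, f a = true ↔ ∃ C ∈ G, SatisfiesClause a C

/-- Relabel the variables of a formula along `φ`. -/
def mapFormula [DecidableEq V] [DecidableEq W] (φ : W → V) (F : SatFormula W) : SatFormula V :=
  F.image (fun C => C.image (fun l => (φ l.1, l.2)))

/-- `G'` is a copy of `F`: it is obtained from `F` by an injective relabeling of variables. -/
def IsCopyOf [DecidableEq V] [DecidableEq W] (F : SatFormula W) (G' : SatFormula V) : Prop :=
  ∃ φ : W → V, Set.InjOn φ ↑(formulaVars F) ∧ G' = mapFormula φ F

/-- The number of copies of `F` in `G`, i.e. of subformulae of `G` isomorphic to `F`. -/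
noncomputable def copyCount [DecidableEq V] [DecidableEq W] (F : SatFormula W)
    (G : SatFormula V) : ℕ :=
  Set.ncard {G' : SatFormula V | G' ⊆ G ∧ IsCopyOf F G'}

/-- The `b`-blowup of a clause: replace each literal by the literal of the same polarity on
one of the `b` duplicates of its variable, in all possible ways. -/
def clauseBlowup [DecidableEq V] (b : ℕ) (C : SatClause V) :
    Finset (SatClause (V × Fin b)) :=
  (C.pi (fun _ => (Finset.univ : Finset (Fin b)))).image
    (fun g => C.attach.image (fun l => ((l.1.1, g l.1 l.2), l.1.2)))

/-- The `b`-blowup of a formula. -/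
def formulaBlowup [DecidableEq V] (b : ℕ) (G : SatFormula V) : SatFormula (V × Fin b) :=
  G.biUnion (clauseBlowup b)

/-- The weight of a formula on `n` variables:
`wt(G) = Σ_i log₂(i+1)·α_i(G)` where `α_i(G)·C(n,k)` counts the `k`-sets of variables
supporting exactly `i` clauses. -/
noncomputable def formulaWt (k n : ℕ) (G : SatFormula (Fin n)) : ℝ :=
  (∑ S ∈ (Finset.univ : Finset (Fin n)).powersetCard k,
    Real.logb 2 (((G.filter (fun C => clauseVars C = S)).card : ℝ) + 1)) / (n.choose k)

/-- A partially directed graph: a set of undirected edges together with a set of directed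
(pointed) edges. -/
structure PDG (V : Type*) where
  undir : Finset (Finset V)
  dir : Finset (Finset V × V)

/-- `H` is a valid `k`-PDG: all edges have `k` vertices, each directed edge is pointed at one
of its vertices, and each `k`-set carries at most one edge (undirected or directed). -/
def PDG.IsValid (k : ℕ) (H : PDG V) : Prop :=
  (∀ e ∈ H.undir, e.card = k) ∧
  (∀ p ∈ H.dir, p.1.card = k ∧ p.2 ∈ p.1) ∧
  (∀ p ∈ H.dir, p.1 ∉ H.undir) ∧
  (∀ p ∈ H.dir, ∀ q ∈ H.dir, p.1 = q.1 → p = q)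

/-- `F` is a subgraph of `H`: a copy of `F` can be obtained from `H` by deleting vertices,
deleting edges, and/or forgetting directions of edges. -/
def PDG.IsSubgraph [DecidableEq V] (F : PDG W) (H : PDG V) : Prop :=
  ∃ φ : W → V, Function.Injective φ ∧
    (∀ e ∈ F.undir, e.image φ ∈ H.undir ∨ ∃ v, (e.image φ, v) ∈ H.dir) ∧
    (∀ p ∈ F.dir, (p.1.image φ, φ p.2) ∈ H.dir)

/-- The image of a PDG under a relabeling of vertices. -/
def PDG.map [DecidableEq V] (φ : W → V) (F : PDG W) : PDG V :=
  ⟨F.undir.image (Finset.image φ), F.dir.image (fun p => (p.1.image φ, φ p.2))⟩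

/-- The PDG `T_k` on vertex set `{0, …, k}` (0-indexed): undirected edges everything-but-`k`
and everything-but-`k-2`, and the edge everything-but-`k-1` directed toward `k`. -/
def TkPDG (k : ℕ) : PDG (Fin (k + 1)) where
  undir := { Finset.univ.erase ⟨k, Nat.lt_succ_self k⟩,
             Finset.univ.erase ⟨k - 2, by omega⟩ }
  dir := { (Finset.univ.erase ⟨k - 1, by omega⟩, ⟨k, Nat.lt_succ_self k⟩) }

/-- A semisimple formula: every `k`-set of variables supports at most one clause, or exactly
two clauses whose polarities differ on exactly one variable. -/
def SemisimpleFormula [DecidableEq V] (G : SatFormula V) : Prop :=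
  ∀ C₁ ∈ G, ∀ C₂ ∈ G, C₁ ≠ C₂ → clauseVars C₁ = clauseVars C₂ →
    (((C₁ \ C₂).image Prod.fst).card = 1 ∧
      ∀ C₃ ∈ G, clauseVars C₃ = clauseVars C₁ → C₃ = C₁ ∨ C₃ = C₂)

/-- The type of a (semisimple) formula: an undirected edge on each variable set supporting
exactly one clause, and for each variable set supporting two clauses a directed edge pointed
at the variable where the two clauses differ. -/
def formulaType [DecidableEq V] (G : SatFormula V) : PDG V where
  undir := (G.filter (fun C => ∀ C' ∈ G, clauseVars C' = clauseVars C → C' = C)).image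
    clauseVars
  dir := ((G ×ˢ G).filter (fun p => p.1 ≠ p.2 ∧ clauseVars p.1 = clauseVars p.2)).biUnion
    (fun p => ((p.1 \ p.2).image Prod.fst).image (fun v => (clauseVars p.1, v)))

end Defs

section AuxHGO


open Finset

/-- Real "falling" binomial coefficient `x choose k`. -/
noncomputable def bc (x : ℝ) (k : ℕ) : ℝ :=
  (∏ i ∈ Finset.range k, (x - i)) / (Nat.factorial k)

lemma bc_zero (x : ℝ) : bc x 0 = 1 := by simp [bc]

lemma factorial_pos_real (k : ℕ) : (0:ℝ) < (Nat.factorial k : ℝ) := by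
  exact_mod_cast k.factorial_pos

lemma bc_pascal (x : ℝ) (k : ℕ) :
    bc x (k+1) = bc (x-1) (k+1) + bc (x-1) k := by
  have h0 : ∏ i ∈ range (k+1), (x - i) = (∏ i ∈ range k, (x - 1 - i)) * x := by
    rw [Finset.prod_range_succ']
    simp only [Nat.cast_zero, sub_zero]
    congr 1
    exact Finset.prod_congr rfl fun i _ => by push_cast; ring
  have h1 : ∏ i ∈ range (k+1), (x - 1 - i) = (∏ i ∈ range k, (x - 1 - i)) * (x - 1 - k) :=
    Finset.prod_range_succ _ _
  have hf : (Nat.factorial (k+1) : ℝ) = (k+1) * (Nat.factorial k) := by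
    push_cast [Nat.factorial_succ]; ring
  have hk := factorial_pos_real k
  unfold bc
  rw [h0, h1, hf]
  field_simp
  ring

lemma bc_ratio (x : ℝ) (k : ℕ) :
    bc x (k+1) = bc x k * (x - k) / (k+1) := by
  have hf : (Nat.factorial (k+1) : ℝ) = (k+1) * (Nat.factorial k) := by
    push_cast [Nat.factorial_succ]; ring
  have hk := factorial_pos_real k
  unfold bc
  rw [Finset.prod_range_succ, hf]
  have hk1 : (0:ℝ) < (k:ℝ)+1 := by positivity
  field_simp
  try ring
  try exact Or.inl trivial

lemma bc_nonneg {x : ℝ} {k : ℕ} (hx : (k:ℝ) - 1 ≤ x) : 0 ≤ bc x k := by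
  apply div_nonneg _ (factorial_pos_real k).le
  apply Finset.prod_nonneg
  intro i hi
  have : (i:ℝ) ≤ (k:ℝ) - 1 := by
    have := Finset.mem_range.1 hi
    have : (i:ℝ) + 1 ≤ (k:ℝ) := by exact_mod_cast this
    linarith
  linarith

lemma bc_mono {x y : ℝ} {k : ℕ} (hx : (k:ℝ) - 1 ≤ x) (hxy : x ≤ y) : bc x k ≤ bc y k := by
  unfold bc
  have hk := factorial_pos_real k
  gcongr with i hi
  all_goals
    first
    | (intro i hi
       have h := Finset.mem_range.1 hi
       have : (i:ℝ) + 1 ≤ (k:ℝ) := by exact_mod_cast h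
       linarith)
    | linarith

lemma pow_le_prod {x : ℝ} {k : ℕ} (hx : (k:ℝ) - 1 ≤ x) :
    (x - ((k:ℝ) - 1)) ^ k ≤ ∏ i ∈ Finset.range k, (x - i) := by
  have hcc : (x - ((k:ℝ) - 1)) ^ k = ∏ _i ∈ Finset.range k, (x - ((k:ℝ)-1)) := by
    rw [Finset.prod_const, Finset.card_range]
  rw [hcc]
  refine Finset.prod_le_prod (fun i hi => by linarith) (fun i hi => ?_)
  have h := Finset.mem_range.1 hi
  have : (i:ℝ) ≤ (k:ℝ) - 1 := by
    have : (i:ℝ) + 1 ≤ (k:ℝ) := by exact_mod_cast h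
    linarith
  linarith

lemma prod_nat_cast_desc (n : ℕ) : ∀ k : ℕ, k ≤ n →
    ∏ i ∈ Finset.range k, ((n:ℝ) - i) = (Nat.factorial n) / (Nat.factorial (n - k))
  | 0, _ => by
    simp only [Finset.range_zero, Finset.prod_empty, Nat.sub_zero]
    exact (div_self (factorial_pos_real n).ne').symm
  | (k+1), h => by
    have h1 : k ≤ n := Nat.le_of_succ_le h
    rw [Finset.prod_range_succ, prod_nat_cast_desc n k h1]
    obtain ⟨a, rfl⟩ : ∃ a, n = k + 1 + a := ⟨n - (k+1), by omega⟩
    have e1 : (((k+1+a:ℕ)):ℝ) - (k:ℝ) = (a:ℝ)+1 := by push_cast; ring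
    have e2 : k+1+a - k = a + 1 := by omega
    have e3 : k+1+a - (k+1) = a := by omega
    rw [e1, e2, e3, Nat.factorial_succ]
    have hp := factorial_pos_real a
    have hq := factorial_pos_real (k+1+a)
    push_cast
    field_simp

lemma bc_succ_self (k : ℕ) : bc ((k:ℝ)+1) k = (k:ℝ)+1 := by
  unfold bc
  have : ((k:ℝ)+1) = (((k+1:ℕ)):ℝ) := by push_cast; ring
  rw [this, prod_nat_cast_desc (k+1) k (by omega)]
  have h2 : k + 1 - k = 1 := by omega
  rw [h2]
  have hp := factorial_pos_real k
  have : (Nat.factorial (k+1) : ℝ) = ((k:ℝ)+1) * (Nat.factorial k) := by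
    push_cast [Nat.factorial_succ]; ring
  rw [this]
  simp [Nat.factorial]
  field_simp

lemma bc_continuous (k : ℕ) : Continuous (fun x : ℝ => bc x k) := by
  unfold bc
  exact (continuous_finset_prod _ fun i _ => (continuous_id.sub continuous_const)).div_const _
open Finset FinsetFamily

namespace HGO

lemma compress01 {n : ℕ} {u : Fin (n+1)} {A : Finset (Fin (n+1))}
    (h0 : (0:Fin (n+1)) ∉ A) (hu : u ∈ A) :
    UV.compress {0} {u} A = insert 0 (A.erase u) := by
  have hd : Disjoint ({0} : Finset (Fin (n+1))) A := by
    simp [Finset.disjoint_singleton_left, h0]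
  have hle : ({u} : Finset (Fin (n+1))) ≤ A := by
    simp [Finset.singleton_subset_iff, hu]
  rw [UV.compress_of_disjoint_of_le hd hle]
  have hne : u ≠ 0 := by rintro rfl; exact h0 hu
  ext b
  simp only [sup_eq_union, mem_sdiff, mem_union, mem_singleton, mem_insert, mem_erase]
  constructor
  · rintro ⟨h1 | h1, h2⟩
    · exact Or.inr ⟨h2, h1⟩
    · exact Or.inl h1
  · rintro (rfl | ⟨h1, h2⟩)
    · exact ⟨Or.inr rfl, (Ne.symm hne)⟩
    · exact ⟨Or.inl h2, h1⟩

noncomputable def fmeasure {n : ℕ} (𝒜 : Finset (Finset (Fin (n+1)))) : ℕ :=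
  ∑ A ∈ 𝒜, ∑ a ∈ A, (a:ℕ)

lemma fmeasure_compression_lt {n : ℕ} {u : Fin (n+1)} {𝒜 : Finset (Finset (Fin (n+1)))}
    (hne : UV.compression {0} {u} 𝒜 ≠ 𝒜) :
    fmeasure (UV.compression {0} {u} 𝒜) < fmeasure 𝒜 := by
  classical
  rw [UV.compression] at hne ⊢
  have q : ∀ Q ∈ {A ∈ 𝒜 | UV.compress {0} {u} A ∉ 𝒜}, UV.compress {0} {u} Q ≠ Q := by
    simp_rw [mem_filter]
    intro Q hQ h
    rw [h] at hQ
    exact hQ.2 hQ.1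
  have uA : {A ∈ 𝒜 | UV.compress {0} {u} A ∈ 𝒜} ∪ {A ∈ 𝒜 | UV.compress {0} {u} A ∉ 𝒜} = 𝒜 :=
    filter_union_filter_not_eq _ _
  have ne₂ : {A ∈ 𝒜 | UV.compress {0} {u} A ∉ 𝒜}.Nonempty := by
    refine nonempty_iff_ne_empty.2 fun z ↦ hne ?_
    rw [filter_image, z, image_empty, union_empty]
    rwa [z, union_empty] at uA
  rw [fmeasure, fmeasure, sum_union UV.compress_disjoint]
  conv_rhs => rw [← uA]
  rw [sum_union (disjoint_filter_filter_not _ _ _), add_lt_add_iff_left, filter_image,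
    sum_image (fun x hx y hy h => UV.compress_injOn (mem_coe.2 hx) (mem_coe.2 hy) h)]
  refine sum_lt_sum_of_nonempty ne₂ fun A hA ↦ ?_
  have hmoved := q A hA
  have hA' := mem_filter.1 hA
  -- the compression condition must hold
  by_cases hcond : Disjoint ({0} : Finset (Fin (n+1))) A ∧ ({u} : Finset (Fin (n+1))) ≤ A
  · have h0A : (0:Fin (n+1)) ∉ A := by
      have := hcond.1
      simp only [Finset.disjoint_singleton_left] at this
      exact this
    have huA : u ∈ A := by
      have := hcond.2
      simpa [Finset.singleton_subset_iff] using this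
    have hu0 : u ≠ 0 := by rintro rfl; exact h0A huA
    rw [compress01 h0A huA]
    have h0e : (0:Fin (n+1)) ∉ A.erase u := fun h => h0A (mem_of_mem_erase h)
    rw [sum_insert h0e]
    have hsum : (∑ a ∈ A.erase u, (a:ℕ)) + (u:ℕ) = ∑ a ∈ A, (a:ℕ) :=
      Finset.sum_erase_add _ _ huA
    have huv : (u:ℕ) ≠ 0 := by
      exact fun h => hu0 (Fin.ext (by rw [h]; simp))
    simp only [Fin.val_zero, zero_add]
    omega
  · exfalso
    apply hmoved
    rw [UV.compress, if_neg hcond]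

lemma exists_shifted {r n : ℕ} (𝒜 : Finset (Finset (Fin (n+1))))
    (h : (↑𝒜 : Set (Finset (Fin (n+1)))).Sized r) :
    ∃ ℬ : Finset (Finset (Fin (n+1))), #(∂ ℬ) ≤ #(∂ 𝒜) ∧ #ℬ = #𝒜 ∧
      (↑ℬ : Set (Finset (Fin (n+1)))).Sized r ∧
      ∀ u, UV.IsCompressed {0} {u} ℬ := by
  classical
  by_cases hc : ∀ u, UV.IsCompressed {0} {u} 𝒜
  · exact ⟨𝒜, le_rfl, rfl, h, hc⟩
  · push_neg at hc
    obtain ⟨u, hu⟩ := hc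
    have hnec : UV.compression {0} {u} 𝒜 ≠ 𝒜 := hu
    have hM : fmeasure (UV.compression {0} {u} 𝒜) < fmeasure 𝒜 :=
      fmeasure_compression_lt hnec
    have hcard : #({0} : Finset (Fin (n+1))) = #({u} : Finset (Fin (n+1))) := by simp
    have hsh : #(∂ (UV.compression {0} {u} 𝒜)) ≤ #(∂ 𝒜) := by
      apply UV.card_shadow_compression_le
      intro x hx
      refine ⟨u, mem_singleton_self u, ?_⟩
      have hx0 : x = 0 := mem_singleton.1 hx
      subst hx0
      simp only [Finset.erase_singleton]
      exact UV.isCompressed_self _ _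
    obtain ⟨ℬ, h1, h2, h3, h4⟩ := exists_shifted (UV.compression {0} {u} 𝒜)
      (h.uvCompression hcard)
    exact ⟨ℬ, h1.trans hsh, h2.trans (UV.card_compression _ _ _), h3, h4⟩
termination_by fmeasure 𝒜
decreasing_by exact hM

/-- Shifted families: replacing any element by `0` stays in the family. -/
lemma shifted_insert {n : ℕ} {ℬ : Finset (Finset (Fin (n+1)))}
    (hcomp : ∀ u, UV.IsCompressed {0} {u} ℬ)
    {e : Finset (Fin (n+1))} (he : e ∈ ℬ) {u : Fin (n+1)} (hu : u ∈ e)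
    (h0 : (0:Fin (n+1)) ∉ e) : insert 0 (e.erase u) ∈ ℬ := by
  have := UV.compress_mem_compression (u := ({0} : Finset (Fin (n+1))))
    (v := ({u} : Finset (Fin (n+1)))) he
  rw [(hcomp u).eq] at this
  rwa [compress01 h0 hu] at this


lemma card_shadow_ge_of_mem {V : Type*} [DecidableEq V] {𝒜 : Finset (Finset V)}
    {e : Finset V} (he : e ∈ 𝒜) : e.card ≤ #(∂ 𝒜) := by
  classical
  have hsub : e.image (fun u => e.erase u) ⊆ ∂ 𝒜 := by
    intro F hF
    obtain ⟨u, hu, rfl⟩ := Finset.mem_image.1 hF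
    exact erase_mem_shadow he hu
  have hinj : Set.InjOn (fun u => e.erase u) ↑e := by
    intro a ha b hb h
    by_contra hab
    have hth : b ∈ e.erase a := Finset.mem_erase.2 ⟨Ne.symm hab, hb⟩
    rw [show e.erase a = e.erase b from h] at hth
    exact (Finset.notMem_erase b e) hth
    
  calc e.card = #(e.image (fun u => e.erase u)) := (Finset.card_image_of_injOn hinj).symm
  _ ≤ #(∂ 𝒜) := Finset.card_le_card hsub

theorem lovasz_fin : ∀ (ℓ : ℕ) (m : ℕ) (n : ℕ) (𝒜 : Finset (Finset (Fin n))),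
    #𝒜 ≤ m → (↑𝒜 : Set (Finset (Fin n))).Sized (ℓ+1) → 𝒜.Nonempty →
    ∀ x : ℝ, (ℓ:ℝ) ≤ x → bc x (ℓ+1) ≤ (#𝒜 : ℝ) → bc x ℓ ≤ (#(∂ 𝒜) : ℝ) := by
  intro ℓ
  induction ℓ with
  | zero =>
    intro m n 𝒜 hm hsz hne x hx hbc
    rw [bc_zero]
    obtain ⟨e, he⟩ := hne
    have he1 : e.card = 1 := hsz he
    obtain ⟨a, rfl⟩ := Finset.card_eq_one.1 he1
    have hmem : ∅ ∈ ∂ 𝒜 := by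
      have := erase_mem_shadow he (Finset.mem_singleton_self a)
      simpa using this
    have : 1 ≤ #(∂ 𝒜) := card_pos.2 ⟨∅, hmem⟩
    exact_mod_cast this
  | succ ℓ ihℓ =>
    intro m
    induction m with
    | zero =>
      intro n 𝒜 hm hsz hne x hx hbc
      exact absurd (card_pos.2 hne) (by omega)
    | succ m ihm =>
      intro n 𝒜 hm hsz hne x hx hbc
      push_cast at hx
      by_cases hxs : x ≤ (ℓ:ℝ) + 2
      · -- small x
        have h1 : bc x (ℓ+1) ≤ bc ((ℓ:ℝ)+2) (ℓ+1) := bc_mono (by push_cast; linarith) hxs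
        have h2 : bc ((ℓ:ℝ)+2) (ℓ+1) = (ℓ:ℝ)+2 := by
          have h3 := bc_succ_self (ℓ+1)
          have e4 : ((ℓ+1:ℕ):ℝ)+1 = (ℓ:ℝ)+2 := by push_cast; ring
          rw [e4] at h3
          exact h3
        obtain ⟨e, he⟩ := hne
        have hsc : (ℓ+1+1 : ℕ) ≤ #(∂ 𝒜) := by
          rw [← hsz he]; exact card_shadow_ge_of_mem he
        have hsc' : ((ℓ:ℝ)+2) ≤ (#(∂ 𝒜) : ℝ) := by exact_mod_cast hsc
        calc bc x (ℓ+1) ≤ (ℓ:ℝ)+2 := h2 ▸ h1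
        _ ≤ _ := hsc'
      · push_neg at hxs
        cases n with
        | zero =>
          exfalso
          obtain ⟨e, he⟩ := hne
          have hc : e.card = ℓ+1+1 := hsz he
          have : e.Nonempty := by rw [← card_pos, hc]; omega
          obtain ⟨v, _⟩ := this
          exact v.elim0
        | succ n =>
          obtain ⟨ℬ, hshB, hcardB, hszB, hcompB⟩ := exists_shifted 𝒜 hsz
          classical
          have hBne : ℬ.Nonempty := by
            rw [← card_pos, hcardB]; exact card_pos.2 hne
          set 𝒮 : Finset (Finset (Fin (n+1))) := ℬ.filter (fun e => (0 : Fin (n+1)) ∈ e) with h𝒮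
          set 𝒜₀ : Finset (Finset (Fin (n+1))) := ℬ.filter (fun e => (0 : Fin (n+1)) ∉ e) with h𝒜₀
          set L : Finset (Finset (Fin (n+1))) := 𝒮.image (fun e => e.erase 0) with hL
          -- F2 : 𝒮 nonempty
          have hSne : 𝒮.Nonempty := by
            obtain ⟨e, he⟩ := hBne
            by_cases h0 : (0 : Fin (n+1)) ∈ e
            · exact ⟨e, mem_filter.2 ⟨he, h0⟩⟩
            · have hecard : e.card = ℓ+1+1 := hszB he
              have hene : e.Nonempty := by rw [← card_pos, hecard]; omega
              obtain ⟨u, hu⟩ := hene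
              refine ⟨insert 0 (e.erase u), mem_filter.2 ⟨shifted_insert hcompB he hu h0, ?_⟩⟩
              exact mem_insert_self _ _
          -- F3 : #L = #𝒮
          have hLcard : #L = #𝒮 := by
            apply Finset.card_image_of_injOn
            intro a ha b hb hab
            have h0a : (0:Fin (n+1)) ∈ a := (mem_filter.1 ha).2
            have h0b : (0:Fin (n+1)) ∈ b := (mem_filter.1 hb).2
            have hab' : a.erase 0 = b.erase 0 := hab
            rw [← Finset.insert_erase h0a, ← Finset.insert_erase h0b, hab']
          -- F4 : L sized ℓ+1
          have hLsz : (↑L : Set (Finset (Fin (n+1)))).Sized (ℓ+1) := by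
            intro G hG
            obtain ⟨e, he, rfl⟩ := Finset.mem_image.1 hG
            rw [Finset.card_erase_of_mem (mem_filter.1 he).2, hszB (mem_filter.1 he).1]
            omega
          -- F5 : ∂𝒜₀ ⊆ L
          have hshadA0 : ∂ 𝒜₀ ⊆ L := by
            intro F hF
            rw [mem_shadow_iff] at hF
            obtain ⟨e, he, u, hu, rfl⟩ := hF
            have heB : e ∈ ℬ := (mem_filter.1 he).1
            have h0e : (0:Fin (n+1)) ∉ e := (mem_filter.1 he).2
            have he' : insert 0 (e.erase u) ∈ ℬ := shifted_insert hcompB heB hu h0e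
            refine Finset.mem_image.2 ⟨insert 0 (e.erase u),
              mem_filter.2 ⟨he', mem_insert_self _ _⟩, ?_⟩
            have h0eu : (0:Fin (n+1)) ∉ e.erase u := fun h => h0e (mem_of_mem_erase h)
            exact Finset.erase_insert h0eu
          -- F6a : L ⊆ shadow ℬ, avoiding 0
          have hLsub : L ⊆ (∂ ℬ).filter (fun F => (0:Fin (n+1)) ∉ F) := by
            intro G hG
            obtain ⟨e, he, rfl⟩ := Finset.mem_image.1 hG
            exact mem_filter.2 ⟨erase_mem_shadow (mem_filter.1 he).1 (mem_filter.1 he).2,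
              Finset.notMem_erase _ _⟩
          -- members of ∂L avoid 0
          have hdL0 : ∀ F ∈ ∂ L, (0:Fin (n+1)) ∉ F := by
            intro F hF
            rw [mem_shadow_iff] at hF
            obtain ⟨G, hG, w, hw, rfl⟩ := hF
            obtain ⟨e, he, rfl⟩ := Finset.mem_image.1 hG
            intro h0
            exact (Finset.notMem_erase _ _) (Finset.mem_of_mem_erase h0)
          -- F6b : image of ∂L under insert 0 sits in shadow ℬ, containing 0
          have hYsub : (∂ L).image (fun F => insert (0:Fin (n+1)) F) ⊆
              (∂ ℬ).filter (fun F => (0:Fin (n+1)) ∈ F) := by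
            intro F hF
            obtain ⟨F', hF', rfl⟩ := Finset.mem_image.1 hF
            rw [mem_shadow_iff] at hF'
            obtain ⟨G, hG, w, hw, rfl⟩ := hF'
            obtain ⟨e, he, rfl⟩ := Finset.mem_image.1 hG
            have heB : e ∈ ℬ := (mem_filter.1 he).1
            have h0e : (0:Fin (n+1)) ∈ e := (mem_filter.1 he).2
            have hw0 : w ≠ 0 := fun h => (Finset.notMem_erase (0:Fin (n+1)) e) (h ▸ hw)
            have hwe : w ∈ e := Finset.mem_of_mem_erase hw
            have key : insert (0:Fin (n+1)) ((e.erase 0).erase w) = e.erase w := by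
              rw [Finset.erase_right_comm]
              exact Finset.insert_erase (Finset.mem_erase.2 ⟨Ne.symm hw0, h0e⟩)
            rw [key]
            exact mem_filter.2 ⟨erase_mem_shadow heB hwe,
              Finset.mem_erase.2 ⟨Ne.symm hw0, h0e⟩⟩
          have hYcard : #((∂ L).image (fun F => insert (0:Fin (n+1)) F)) = #(∂ L) := by
            apply Finset.card_image_of_injOn
            intro a ha b hb hab
            have h0a := hdL0 a (mem_coe.1 ha)
            have h0b := hdL0 b (mem_coe.1 hb)
            have hab' : insert (0:Fin (n+1)) a = insert (0:Fin (n+1)) b := hab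
            rw [← Finset.erase_insert h0a, ← Finset.erase_insert h0b, hab']
          have hsplitSh : #((∂ ℬ).filter (fun F => (0:Fin (n+1)) ∉ F)) +
              #((∂ ℬ).filter (fun F => (0:Fin (n+1)) ∈ F)) = #(∂ ℬ) := by
            rw [add_comm]
            exact Finset.card_filter_add_card_filter_not _
          by_cases hcase : bc (x-1) (ℓ+1) ≤ (#𝒮 : ℝ)
          · -- Case A
            have hLne : L.Nonempty := hSne.image _
            have hbcL : bc (x-1) (ℓ+1) ≤ (#L : ℝ) := by rw [hLcard]; exact hcase
            have hIH := ihℓ (#L) (n+1) L le_rfl hLsz hLne (x-1)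
              (by push_cast; linarith) hbcL
            -- combine
            have c1 : (#L : ℝ) ≤ (#((∂ ℬ).filter (fun F => (0:Fin (n+1)) ∉ F)) : ℝ) := by
              exact_mod_cast Finset.card_le_card hLsub
            have c2 : (#(∂ L) : ℝ) ≤ (#((∂ ℬ).filter (fun F => (0:Fin (n+1)) ∈ F)) : ℝ) := by
              rw [← hYcard]
              exact_mod_cast Finset.card_le_card hYsub
            have c3 : (#(∂ ℬ) : ℝ) ≤ (#(∂ 𝒜) : ℝ) := by exact_mod_cast hshB
            have c4 : ((#((∂ ℬ).filter (fun F => (0:Fin (n+1)) ∉ F)) : ℝ) +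
                (#((∂ ℬ).filter (fun F => (0:Fin (n+1)) ∈ F)) : ℝ)) = (#(∂ ℬ) : ℝ) := by
              exact_mod_cast hsplitSh
            have hp := bc_pascal x ℓ
            have hbcL' : bc (x-1) (ℓ+1) ≤ (#L : ℝ) := hbcL
            linarith
          · -- Case B : contradiction
            push_neg at hcase
            exfalso
            have hsplitB : #𝒜₀ + #𝒮 = #ℬ := by
              rw [add_comm]
              exact Finset.card_filter_add_card_filter_not _
            have hS1 : 1 ≤ #𝒮 := card_pos.2 hSne
            have hBm : #ℬ ≤ m + 1 := by rw [hcardB]; exact hm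
            have hA0m : #𝒜₀ ≤ m := by omega
            have hpas : bc x (ℓ+1+1) = bc (x-1) (ℓ+1+1) + bc (x-1) (ℓ+1) := bc_pascal x (ℓ+1)
            have hBA : (#ℬ : ℝ) = (#𝒜 : ℝ) := by exact_mod_cast hcardB
            have hsum : (#𝒜₀ : ℝ) + (#𝒮 : ℝ) = (#ℬ : ℝ) := by exact_mod_cast hsplitB
            have hm₀ : bc (x-1) (ℓ+1+1) < (#𝒜₀ : ℝ) := by linarith
            have hm₀pos : 0 < (#𝒜₀ : ℝ) := by
              have := bc_nonneg (x := x-1) (k := ℓ+1+1) (by push_cast; linarith)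
              linarith
            have hA0ne : 𝒜₀.Nonempty := by
              rw [← card_pos]
              exact_mod_cast hm₀pos
            have hA0sz : (↑𝒜₀ : Set (Finset (Fin (n+1)))).Sized (ℓ+1+1) := by
              intro A hA
              exact hszB (Finset.filter_subset _ _ hA)
            have hIH := ihm (n+1) 𝒜₀ hA0m hA0sz hA0ne (x-1)
              (by push_cast; linarith) (le_of_lt hm₀)
            have hcon : (#(∂ 𝒜₀) : ℝ) ≤ (#𝒮 : ℝ) := by
              rw [← hLcard]
              exact_mod_cast Finset.card_le_card hshadA0
            linarith


theorem lovasz_card {V : Type*} [DecidableEq V] (ℓ : ℕ) (𝒜 : Finset (Finset V))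
    (hsz : (↑𝒜 : Set (Finset V)).Sized (ℓ+1)) (hne : 𝒜.Nonempty)
    (x : ℝ) (hx : (ℓ:ℝ) ≤ x) (hbc : bc x (ℓ+1) ≤ (#𝒜 : ℝ)) :
    bc x ℓ ≤ (#(∂ 𝒜) : ℝ) := by
  classical
  set U : Finset V := 𝒜.sup id with hU
  have hAU : ∀ {A}, A ∈ 𝒜 → A ⊆ U := fun hA => Finset.le_sup (f := id) hA
  have hUne : U.Nonempty := by
    obtain ⟨e, he⟩ := hne
    have hec : e.card = ℓ+1 := hsz he
    have hene : e.Nonempty := by rw [← card_pos, hec]; omega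
    obtain ⟨v, hv⟩ := hene
    exact ⟨v, hAU he hv⟩
  obtain ⟨u₀, hu₀⟩ := hUne
  let eqv := U.equivFin
  set φ : V → Fin (#U) := fun v => if h : v ∈ U then eqv ⟨v, h⟩ else eqv ⟨u₀, hu₀⟩ with hφ
  have hinj : Set.InjOn φ ↑U := by
    intro a ha b hb h
    have ha' : a ∈ U := mem_coe.1 ha
    have hb' : b ∈ U := mem_coe.1 hb
    simp only [hφ, dif_pos ha', dif_pos hb'] at h
    have := eqv.injective h
    exact congrArg Subtype.val this
  set 𝒜' : Finset (Finset (Fin (#U))) := 𝒜.image (fun A => A.image φ) with h𝒜'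
  have himgeq : ∀ {A B : Finset V}, A ⊆ U → B ⊆ U → A.image φ = B.image φ → A = B := by
    intro A B hA hB h
    apply Finset.Subset.antisymm
    · intro a haA
      have : φ a ∈ B.image φ := by rw [← h]; exact Finset.mem_image_of_mem φ haA
      obtain ⟨b, hbB, hba⟩ := Finset.mem_image.1 this
      have : b = a := hinj (hB hbB) (hA haA) hba
      rwa [← this]
    · intro b hbB
      have : φ b ∈ A.image φ := by rw [h]; exact Finset.mem_image_of_mem φ hbB
      obtain ⟨a, haA, hab⟩ := Finset.mem_image.1 this
      have : a = b := hinj (hA haA) (hB hbB) hab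
      rwa [← this]
  have hcard' : #𝒜' = #𝒜 :=
    Finset.card_image_of_injOn fun A hA B hB h =>
      himgeq (hAU (mem_coe.1 hA)) (hAU (mem_coe.1 hB)) h
  have hsz' : (↑𝒜' : Set (Finset (Fin (#U)))).Sized (ℓ+1) := by
    intro A' hA'
    obtain ⟨A, hA, rfl⟩ := Finset.mem_image.1 (mem_coe.1 hA')
    rw [Finset.card_image_of_injOn (hinj.mono ?_), hsz hA]
    exact_mod_cast hAU hA
  have hne' : 𝒜'.Nonempty := hne.image _
  have hbc' : bc x (ℓ+1) ≤ (#𝒜' : ℝ) := by rw [hcard']; exact hbc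
  have hmain := lovasz_fin ℓ (#𝒜') (#U) 𝒜' le_rfl hsz' hne' x hx hbc'
  -- transfer shadow bound back
  have hshsub : ∂ 𝒜' ⊆ (∂ 𝒜).image (fun A => A.image φ) := by
    intro F hF
    rw [mem_shadow_iff] at hF
    obtain ⟨A', hA', b, hb, rfl⟩ := hF
    obtain ⟨A, hA, rfl⟩ := Finset.mem_image.1 hA'
    obtain ⟨a, haA, rfl⟩ := Finset.mem_image.1 hb
    have herase : (A.image φ).erase (φ a) = (A.erase a).image φ := by
      ext c
      constructor
      · intro hc
        have hc1 := Finset.mem_erase.1 hc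
        obtain ⟨d, hdA, hdc⟩ := Finset.mem_image.1 hc1.2
        have hda : d ≠ a := by
          rintro rfl
          exact hc1.1 hdc.symm
        exact Finset.mem_image.2 ⟨d, Finset.mem_erase.2 ⟨hda, hdA⟩, hdc⟩
      · intro hc
        obtain ⟨d, hd, hdc⟩ := Finset.mem_image.1 hc
        have hd1 := Finset.mem_erase.1 hd
        refine Finset.mem_erase.2 ⟨?_, Finset.mem_image.2 ⟨d, hd1.2, hdc⟩⟩
        rw [← hdc]
        intro h
        exact hd1.1 (hinj (hAU hA hd1.2) (hAU hA haA) h)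
    rw [herase]
    exact Finset.mem_image.2 ⟨A.erase a, erase_mem_shadow hA haA, rfl⟩
  have hfin : (#(∂ 𝒜') : ℝ) ≤ (#(∂ 𝒜) : ℝ) := by
    have h1 : #(∂ 𝒜') ≤ #((∂ 𝒜).image (fun A => A.image φ)) := Finset.card_le_card hshsub
    have h2 : #((∂ 𝒜).image (fun A => A.image φ)) ≤ #(∂ 𝒜) := Finset.card_image_le
    exact_mod_cast h1.trans h2
  linarith


lemma key_bound' {V : Type*} [DecidableEq V] (j m T : ℕ)
    (E : Finset (Finset V)) (hsz : (↑E : Set (Finset V)).Sized (j+1)) (hm : #E ≤ m)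
    (hTy : ((Nat.factorial (j+1) : ℝ) * (m:ℝ)) ^ ((1:ℝ)/((j:ℝ)+1)) ≤ ((j:ℝ)+1) * (T:ℝ)) :
    (#E : ℝ) ≤ (T:ℝ) * (#(∂ E) : ℝ) := by
  classical
  rcases E.eq_empty_or_nonempty with rfl | hne
  · simp only [Finset.card_empty, Nat.cast_zero]
    positivity
  have hm1 : 1 ≤ #E := card_pos.2 hne
  have hm'm : (#E : ℝ) ≤ (m : ℝ) := by exact_mod_cast hm
  have hfac := factorial_pos_real (j+1)
  set Y : ℝ := (Nat.factorial (j+1) : ℝ) * (#E : ℝ) with hY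
  have hY1 : 1 ≤ Y := by
    have h1 : (1:ℝ) ≤ (Nat.factorial (j+1) : ℝ) := by
      exact_mod_cast (j+1).factorial_pos
    have h2 : (1:ℝ) ≤ (#E : ℝ) := by exact_mod_cast hm1
    nlinarith
  set f : ℝ → ℝ := fun y => bc ((j:ℝ) + y) (j+1) with hf
  have hf0 : f 0 = 0 := by
    simp only [hf, bc, add_zero]
    rw [Finset.prod_eq_zero (Finset.mem_range.2 (Nat.lt_succ_self j)) (by norm_num)]
    simp
  have hfY : (#E : ℝ) ≤ f Y := by
    have hx : ((j+1:ℕ):ℝ) - 1 ≤ (j:ℝ) + Y := by push_cast; nlinarith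
    have hp := pow_le_prod (x := (j:ℝ) + Y) (k := j+1) hx
    have he : ((j:ℝ) + Y - ((((j+1:ℕ)):ℝ) - 1)) = Y := by push_cast; ring
    rw [he] at hp
    have hYp : Y ≤ Y ^ (j+1) := le_self_pow₀ hY1 (by omega)
    have hchain : Y ≤ ∏ i ∈ Finset.range (j+1), ((j:ℝ) + Y - i) := le_trans hYp hp
    have hq : Y / (Nat.factorial (j+1):ℝ) ≤ f Y := by
      simp only [hf, bc]
      gcongr
    calc (#E:ℝ) = Y / (Nat.factorial (j+1):ℝ) := by rw [hY]; field_simp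
    _ ≤ f Y := hq
  have hcont : ContinuousOn f (Set.Icc 0 Y) :=
    ((bc_continuous (j+1)).comp (continuous_const.add continuous_id)).continuousOn
  have hmem : (#E:ℝ) ∈ Set.Icc (f 0) (f Y) := by
    rw [hf0]
    exact ⟨by positivity, hfY⟩
  obtain ⟨y, hyI, hgy⟩ := intermediate_value_Icc (by linarith : (0:ℝ) ≤ Y) hcont hmem
  obtain ⟨hy0, hyY⟩ := Set.mem_Icc.1 hyI
  set x : ℝ := (j:ℝ) + y with hxdef
  have hbcx : bc x (j+1) = (#E:ℝ) := hgy
  have hlv := lovasz_card j E hsz hne x (by linarith : (j:ℝ) ≤ x) hbcx.le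
  have hratio := bc_ratio x j
  -- y ^ (j+1) ≤ (j+1)! * m
  have hyp : y ^ (j+1) ≤ (Nat.factorial (j+1):ℝ) * (m:ℝ) := by
    have hx2 : ((j+1:ℕ):ℝ) - 1 ≤ x := by push_cast; simp only [hxdef]; linarith
    have hp := pow_le_prod (x := x) (k := j+1) hx2
    have he : (x - ((((j+1:ℕ)):ℝ) - 1)) = y := by push_cast; simp only [hxdef]; ring
    rw [he] at hp
    have hprod : (∏ i ∈ Finset.range (j+1), (x - i)) =
        (Nat.factorial (j+1):ℝ) * bc x (j+1) := by
      unfold bc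
      field_simp
    rw [hprod, hbcx] at hp
    nlinarith
  -- y ≤ (j+1) * T
  have hyT : y ≤ ((j:ℝ)+1) * (T:ℝ) := by
    have h1 : ((y ^ (j+1) : ℝ)) ^ ((1:ℝ)/((j:ℝ)+1)) ≤
        ((Nat.factorial (j+1):ℝ) * (m:ℝ)) ^ ((1:ℝ)/((j:ℝ)+1)) := by
      apply Real.rpow_le_rpow (by positivity) hyp (by positivity)
    have h2 : ((y ^ (j+1) : ℝ)) ^ ((1:ℝ)/((j:ℝ)+1)) = y := by
      rw [← Real.rpow_natCast y (j+1), ← Real.rpow_mul hy0]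
      have : ((j+1:ℕ):ℝ) * ((1:ℝ)/((j:ℝ)+1)) = 1 := by
        push_cast
        field_simp
      rw [this, Real.rpow_one]
    rw [h2] at h1
    exact h1.trans hTy
  -- conclude
  have hS0 : (0:ℝ) ≤ (#(∂ E) : ℝ) := by positivity
  have hstep1 : (#E:ℝ) = bc x j * y / ((j:ℝ)+1) := by
    rw [← hbcx, hratio]
    have : x - (j:ℝ) = y := by simp only [hxdef]; ring
    rw [this]
    try push_cast
    try ring
  have hstep2 : bc x j * y ≤ (#(∂ E) : ℝ) * y :=
    mul_le_mul_of_nonneg_right hlv hy0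
  have hstep3 : (#(∂ E) : ℝ) * y ≤ (#(∂ E) : ℝ) * (((j:ℝ)+1) * (T:ℝ)) :=
    mul_le_mul_of_nonneg_left hyT hS0
  have hjpos : (0:ℝ) < (j:ℝ)+1 := by positivity
  rw [hstep1]
  rw [div_le_iff₀ hjpos]
  nlinarith


theorem main (ℓ : ℕ) (hℓ : 2 ≤ ℓ) {V : Type*} [DecidableEq V]
    (H : Finset (Finset V)) (hunif : ∀ e ∈ H, e.card = ℓ) :
    ∃ f : {e : Finset V // e ∈ H} → V, (∀ e : {e : Finset V // e ∈ H}, f e ∈ e.1) ∧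
      ∀ S : Finset V, S.card = ℓ - 1 →
        (H.attach.filter (fun e => S ⊆ e.1 ∧ f e ∉ S)).card ≤
          ⌈((Nat.factorial (ℓ - 1) : ℝ) / (Nat.factorial ℓ : ℝ) ^ (((ℓ : ℝ) - 1) / ℓ)) *
            (H.card : ℝ) ^ ((1 : ℝ) / ℓ)⌉₊ := by
  classical
  obtain ⟨j, rfl⟩ : ∃ j, ℓ = j + 1 := ⟨ℓ - 1, by omega⟩
  set T : ℕ := ⌈((Nat.factorial (j + 1 - 1) : ℝ) /
      (Nat.factorial (j + 1) : ℝ) ^ ((((j+1) : ℕ) - 1 : ℝ) / ((j+1 : ℕ) : ℝ)) ) *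
      ((H.card : ℝ) ^ ((1 : ℝ) / ((j+1 : ℕ) : ℝ)))⌉₊ with hTdef
  -- the analytic bound for T
  have hTy : ((Nat.factorial (j+1) : ℝ) * (H.card : ℝ)) ^ ((1:ℝ)/((j:ℝ)+1)) ≤
      ((j:ℝ)+1) * (T:ℝ) := by
    set F : ℝ := (Nat.factorial (j+1) : ℝ) with hF
    set p : ℝ := (j:ℝ) + 1 with hp
    have hFpos : (0:ℝ) < F := factorial_pos_real (j+1)
    have hppos : (0:ℝ) < p := by positivity
    have hq : F ^ ((p-1)/p) * F ^ ((1:ℝ)/p) = F := by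
      rw [← Real.rpow_add hFpos]
      have h1 : (p-1)/p + (1:ℝ)/p = 1 := by field_simp; ring
      rw [h1, Real.rpow_one]
    have hqpos : (0:ℝ) < F ^ ((p-1)/p) := Real.rpow_pos_of_pos hFpos _
    have hpj : p * (Nat.factorial j : ℝ) = F := by
      rw [hF, hp]
      push_cast [Nat.factorial_succ]
      ring
    have hcan : ((j + 1 : ℕ) : ℝ) = p := by push_cast [hp]; ring
    have hsub : ((((j+1) : ℕ) : ℝ) - 1) = p - 1 := by rw [hcan]
    have hfacidx : (Nat.factorial (j + 1 - 1) : ℝ) = (Nat.factorial j : ℝ) := by norm_num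
    have hle := Nat.le_ceil (((Nat.factorial (j + 1 - 1) : ℝ) /
      (Nat.factorial (j + 1) : ℝ) ^ ((((j+1) : ℕ) - 1 : ℝ) / ((j+1 : ℕ) : ℝ)) ) *
      ((H.card : ℝ) ^ ((1 : ℝ) / ((j+1 : ℕ) : ℝ))))
    rw [← hTdef] at hle
    rw [hfacidx, hsub, hcan, ← hF] at hle
    -- hle : (j! / F^((p-1)/p)) * H.card^(1/p) ≤ T
    have hm0 : (0:ℝ) ≤ (H.card : ℝ) := by positivity
    have hkey : p * ((Nat.factorial j : ℝ) / F ^ ((p-1)/p) * (H.card : ℝ) ^ ((1:ℝ)/p)) =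
        (F * (H.card : ℝ)) ^ ((1:ℝ)/p) := by
      rw [Real.mul_rpow hFpos.le hm0]
      have hF1p : F ^ ((1:ℝ)/p) = F / F ^ ((p-1)/p) := by
        rw [eq_div_iff hqpos.ne', mul_comm]
        exact hq
      rw [hF1p, ← hpj]
      ring
    calc (F * (H.card : ℝ)) ^ ((1:ℝ)/p) =
        p * ((Nat.factorial j : ℝ) / F ^ ((p-1)/p) * (H.card : ℝ) ^ ((1:ℝ)/p)) := hkey.symm
    _ ≤ p * (T:ℝ) := by
        apply mul_le_mul_of_nonneg_left hle hppos.le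
  -- Hall's theorem setup
  set tfun : {e : Finset V // e ∈ H} → Finset (Finset V × Fin T) :=
    fun e => (∂ ({e.1} : Finset (Finset V))) ×ˢ (Finset.univ : Finset (Fin T)) with htfun
  have hall : ∀ s : Finset {e : Finset V // e ∈ H}, #s ≤ #(s.biUnion tfun) := by
    intro s
    set E : Finset (Finset V) := s.image (fun e => e.1) with hE
    have hEcard : #E = #s := Finset.card_image_of_injective _ Subtype.val_injective
    have hEH : E ⊆ H := by
      intro A hA
      obtain ⟨a, _, rfl⟩ := Finset.mem_image.1 hA
      exact a.2
    have hEsz : (↑E : Set (Finset V)).Sized (j+1) := by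
      intro A hA
      obtain ⟨a, _, rfl⟩ := Finset.mem_image.1 (mem_coe.1 hA)
      exact hunif _ a.2
    have hbiU : s.biUnion tfun = (∂ E) ×ˢ (Finset.univ : Finset (Fin T)) := by
      ext p
      constructor
      · intro hpm
        obtain ⟨a, has, hpt⟩ := Finset.mem_biUnion.1 hpm
        simp only [htfun] at hpt
        have h1 := (Finset.mem_product.1 hpt).1
        rw [mem_shadow_iff] at h1
        obtain ⟨B, hB, u, hu, hBu⟩ := h1
        have hBa : B = a.1 := Finset.mem_singleton.1 hB
        subst hBa
        refine Finset.mem_product.2 ⟨?_, Finset.mem_univ _⟩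
        rw [← hBu]
        exact erase_mem_shadow (Finset.mem_image.2 ⟨a, has, rfl⟩) hu
      · intro hpm
        have h1 := (Finset.mem_product.1 hpm).1
        rw [mem_shadow_iff] at h1
        obtain ⟨B, hB, u, hu, hBu⟩ := h1
        obtain ⟨a, has, rfl⟩ := Finset.mem_image.1 hB
        refine Finset.mem_biUnion.2 ⟨a, has, ?_⟩
        simp only [htfun]
        refine Finset.mem_product.2 ⟨?_, Finset.mem_univ _⟩
        rw [← hBu]
        exact erase_mem_shadow (Finset.mem_singleton_self _) hu
    have hkb := key_bound' j (#H) T E hEsz (Finset.card_le_card hEH) hTy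
    have hfin : (#s : ℝ) ≤ (T:ℝ) * (#(∂ E) : ℝ) := by rw [← hEcard]; exact hkb
    rw [hbiU, Finset.card_product]
    have : #(Finset.univ : Finset (Fin T)) = T := by simp
    rw [this]
    have := hfin
    rw [mul_comm] at this
    exact_mod_cast this
  obtain ⟨g, hginj, hg⟩ := (Finset.all_card_le_biUnion_card_iff_exists_injective tfun).1 hall
  have hex : ∀ e : {e : Finset V // e ∈ H}, ∃ a, a ∈ e.1 ∧ e.1.erase a = (g e).1 := by
    intro e
    have hge := hg e
    rw [htfun, Finset.mem_product] at hge
    have h1 := hge.1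
    rw [mem_shadow_iff] at h1
    obtain ⟨B, hB, u, hu, hBu⟩ := h1
    have : B = e.1 := Finset.mem_singleton.1 hB
    subst this
    exact ⟨u, hu, hBu⟩
  choose f hf1 hf2 using hex
  refine ⟨f, hf1, ?_⟩
  intro S hS
  have hgs : ∀ a ∈ H.attach.filter (fun e => S ⊆ e.1 ∧ f e ∉ S), (g a).1 = S := by
    intro a ha
    have ha' := (Finset.mem_filter.1 ha).2
    have hsub : S ⊆ a.1.erase (f a) :=
      Finset.subset_erase.2 ⟨ha'.1, fun h => ha'.2 h⟩
    have hcS : #S = j := by omega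
    have hce : #(a.1.erase (f a)) = j := by
      rw [Finset.card_erase_of_mem (hf1 a), hunif _ a.2]
      omega
    have heq : a.1.erase (f a) = S :=
      (Finset.eq_of_subset_of_card_le hsub (by omega)).symm
    rw [← hf2 a, heq]
  refine le_trans (Finset.card_le_card_of_injOn (fun e => (g e).2)
    (fun a _ => Finset.mem_univ _) ?_) (by simp)
  intro a ha b hb hab
  apply hginj
  have h1 : (g a).1 = S := hgs a (mem_coe.1 ha)
  have h2 : (g b).1 = S := hgs b (mem_coe.1 hb)
  have : (g a).2 = (g b).2 := hab
  exact Prod.ext (h1.trans h2.symm) this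

end HGO

end AuxHGO

/-- Every `ℓ`-uniform hypergraph `H` admits an orientation such that for
every set `S` of `ℓ−1` vertices, the number of edges of `H` containing `S` and oriented at a
vertex outside `S` is at most `⌈((ℓ−1)!/(ℓ!)^((ℓ−1)/ℓ))·e(H)^(1/ℓ)⌉`. -/
theorem hypergraph_orientation (ℓ : ℕ) (hℓ : 2 ≤ ℓ) {V : Type*} [DecidableEq V]
    (H : Finset (Finset V)) (hunif : ∀ e ∈ H, e.card = ℓ) :
    ∃ f : {e : Finset V // e ∈ H} → V, (∀ e : {e : Finset V // e ∈ H}, f e ∈ e.1) ∧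
      ∀ S : Finset V, S.card = ℓ - 1 →
        (H.attach.filter (fun e => S ⊆ e.1 ∧ f e ∉ S)).card ≤
          ⌈((Nat.factorial (ℓ - 1) : ℝ) / (Nat.factorial ℓ : ℝ) ^ (((ℓ : ℝ) - 1) / ℓ)) *
            (H.card : ℝ) ^ ((1 : ℝ) / ℓ)⌉₊ := by
  exact HGO.main ℓ hℓ H hunif
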